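/- Let λ ∈ ℂ with Im λ ≠ 0, let ω, δ ∈ ℝ, and define φ_n(x) = γ_n·√(|Im λ|/π)·e^{iωx}·(λ−x)^{n+δ}/(conj(λ)−x)^{n+δ+1} for n ∈ ℤ, where |γ_n| = 1 and the complex powers are defined via a continuous branch (noting (λ−x)/(conj(λ)−x) has modulus 1 and is never 1 for x real). Then {φ_n}_{n∈ℤ} is an orthonormal system in L²(ℝ). -/

import Mathlib

open Complex MeasureTheory Real Filter Set

lemma aux_integrable (a b : ℝ) (hb : b ≠ 0) :
    Integrable fun x : ℝ => ((x - a) ^ 2 + b ^ 2)⁻¹ := by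
  have h0 : Integrable fun x : ℝ => (1 + ((x - a) / b) ^ 2)⁻¹ :=
    (integrable_inv_one_add_sq.comp_div hb).comp_sub_right a
  have := h0.const_mul ((b ^ 2)⁻¹)
  refine this.congr (Eventually.of_forall fun x => ?_)
  have hb2 : (b:ℝ) ^ 2 ≠ 0 := pow_ne_zero _ hb
  field_simp
  ring


lemma aux_integral (a b : ℝ) (hb : b ≠ 0) :
    ∫ x : ℝ, ((x - a) ^ 2 + b ^ 2)⁻¹ = π / |b| := by
  have hb2 : (b:ℝ) ^ 2 ≠ 0 := pow_ne_zero _ hb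
  have habs : |b| ≠ 0 := abs_ne_zero.mpr hb
  have h1 : ∀ x : ℝ, ((x - a) ^ 2 + b ^ 2)⁻¹ = (b ^ 2)⁻¹ * (1 + ((x - a) / b) ^ 2)⁻¹ := by
    intro x; field_simp; ring
  simp_rw [h1]
  rw [integral_const_mul]
  have h2 : ∫ x : ℝ, (1 + ((x - a) / b) ^ 2)⁻¹ = |b| * π := by
    rw [integral_sub_right_eq_self (fun y : ℝ => (1 + (y / b) ^ 2)⁻¹) a]
    rw [Measure.integral_comp_div (fun y : ℝ => (1 + y ^ 2)⁻¹) b]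
    rw [integral_univ_inv_one_add_sq]
    simp [smul_eq_mul]
  rw [h2, ← _root_.sq_abs b]
  field_simp

lemma key_zero (l : ℂ) (him : l.im ≠ 0) (H : ℝ → ℝ) (hH : Continuous H)
    (hHarg : ∀ x : ℝ, Complex.exp (I * H x) = (l - x) / ((starRingEnd ℂ) l - x))
    (k : ℤ) (hk : k ≠ 0) :
    ∫ x : ℝ, Complex.exp (I * k * H x) / (((starRingEnd ℂ) l - x) * (l - x)) = 0 := by
  set c : ℂ := (starRingEnd ℂ) l with hc
  have hkc : (k : ℂ) ≠ 0 := Int.cast_ne_zero.mpr hk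
  have hlc : l - c ≠ 0 := by
    intro h
    apply him
    have := congrArg Complex.im h
    simp [hc, Complex.sub_im, Complex.conj_im] at this
    linarith
  have hden1 : ∀ x : ℝ, c - (x : ℂ) ≠ 0 := by
    intro x h
    apply him
    have := congrArg Complex.im h
    simpa [hc, Complex.sub_im, Complex.conj_im] using this
  have hden2 : ∀ x : ℝ, l - (x : ℂ) ≠ 0 := by
    intro x h
    apply him
    have := congrArg Complex.im h
    simpa [Complex.sub_im] using this
  set w : ℝ → ℂ := fun x => (l - x) / (c - x) with hw
  have hwne : ∀ x : ℝ, w x ≠ 0 := fun x => div_ne_zero (hden2 x) (hden1 x)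
  have hexp : ∀ x : ℝ, Complex.exp (I * k * H x) = w x ^ k := by
    intro x
    rw [show I * (k : ℂ) * (H x : ℂ) = (k : ℂ) * (I * H x) by ring, Complex.exp_int_mul,
      hHarg x]
  set F : ℝ → ℂ := fun x => w x ^ k / ((k : ℂ) * (l - c)) with hF
  set g : ℝ → ℂ := fun x => Complex.exp (I * k * H x) / ((c - x) * (l - x)) with hg
  -- derivative
  have hderiv : ∀ x : ℝ, HasDerivAt F (g x) x := by
    intro x
    have hid : HasDerivAt (fun y : ℝ => (y : ℂ)) 1 x := by
      exact (hasDerivAt_id x).ofReal_comp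
    have hnum : HasDerivAt (fun y : ℝ => l - (y : ℂ)) (-1) x := by
      have := (hasDerivAt_const x l).sub hid; rw [zero_sub] at this; exact this
    have hden : HasDerivAt (fun y : ℝ => c - (y : ℂ)) (-1) x := by
      have := (hasDerivAt_const x c).sub hid; rw [zero_sub] at this; exact this
    have hwd : HasDerivAt w ((l - c) / (c - x) ^ 2) x := by
      have := hnum.div hden (hden1 x)
      convert this using 1
      · rfl
      · rfl
      ring
    have hzp : HasDerivAt (fun z : ℂ => z ^ k) ((k : ℂ) * w x ^ (k - 1)) (w x) :=
      hasDerivAt_zpow k (w x) (Or.inl (hwne x))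
    have hcomp : HasDerivAt (fun y : ℝ => w y ^ k)
        ((k : ℂ) * w x ^ (k - 1) * ((l - c) / (c - x) ^ 2)) x := hzp.comp x hwd
    have hFd := hcomp.div_const ((k : ℂ) * (l - c))
    convert hFd using 1
    · rfl
    have hwk : w x ^ k = w x ^ (k - 1) * w x := by
      rw [← zpow_add_one₀ (hwne x) (k - 1), sub_add_cancel]
    show g x = _
    rw [hg]
    simp only
    rw [hexp x, hwk]
    have h1 := hden1 x
    have h2 := hden2 x
    generalize w x ^ (k - 1) = u
    simp only [hw]
    field_simp
  -- integrability
  have hdenR : ∀ x : ℝ, (c - (x : ℂ)) * (l - x) = (((x - l.re) ^ 2 + l.im ^ 2 : ℝ) : ℂ) := by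
    intro x
    have h1 : c - (x : ℂ) = (starRingEnd ℂ) (l - x) := by
      simp [hc, map_sub, Complex.conj_ofReal]
    rw [h1, mul_comm, Complex.mul_conj]
    norm_cast
    simp [Complex.normSq_apply, Complex.sub_re, Complex.sub_im]
    ring
  have hcont : Continuous g := by
    apply Continuous.div
    · exact Complex.continuous_exp.comp
        ((continuous_const.mul (Complex.continuous_ofReal.comp hH)))
    · exact ((continuous_const.sub Complex.continuous_ofReal).mul
        (continuous_const.sub Complex.continuous_ofReal))
    · exact fun x => mul_ne_zero (hden1 x) (hden2 x)
  have hint : Integrable g := by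
    refine (aux_integrable l.re l.im him).mono' hcont.aestronglyMeasurable
      (Eventually.of_forall fun x => ?_)
    have hpos : (0:ℝ) ≤ (x - l.re) ^ 2 + l.im ^ 2 := by positivity
    rw [hg]
    simp only [norm_div, hdenR x]
    rw [Complex.norm_exp,
      show (I * (k:ℂ) * (H x : ℂ)).re = 0 by simp, Real.exp_zero, Complex.norm_real,
      Real.norm_eq_abs, _root_.abs_of_nonneg hpos, one_div]
  -- limits
  have hwt : ∀ x : ℝ, w x = 1 + (l - c) / (c - x) := by
    intro x
    have h1 := hden1 x
    simp only [hw]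
    field_simp
    ring
  have hnorm_top : Tendsto (fun x : ℝ => ‖c - (x : ℂ)‖) atTop atTop := by
    apply tendsto_atTop_mono (f := fun x : ℝ => |x| - ‖c‖)
    · intro x
      calc |x| - ‖c‖ = ‖(x:ℂ)‖ - ‖c‖ := by rw [Complex.norm_real, Real.norm_eq_abs]
        _ ≤ ‖(x:ℂ) - c‖ := norm_sub_norm_le _ _
        _ = ‖c - (x:ℂ)‖ := norm_sub_rev _ _
    · exact (tendsto_atTop_add_const_right atTop (-‖c‖) tendsto_abs_atTop_atTop).congr (fun x => (sub_eq_add_neg _ _).symm)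
  have hnorm_bot : Tendsto (fun x : ℝ => ‖c - (x : ℂ)‖) atBot atTop := by
    apply tendsto_atTop_mono (f := fun x : ℝ => |x| - ‖c‖)
    · intro x
      calc |x| - ‖c‖ = ‖(x:ℂ)‖ - ‖c‖ := by rw [Complex.norm_real, Real.norm_eq_abs]
        _ ≤ ‖(x:ℂ) - c‖ := norm_sub_norm_le _ _
        _ = ‖c - (x:ℂ)‖ := norm_sub_rev _ _
    · exact (tendsto_atTop_add_const_right atBot (-‖c‖) tendsto_abs_atBot_atTop).congr (fun x => (sub_eq_add_neg _ _).symm)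
  have hwlim : ∀ (lf : Filter ℝ), Tendsto (fun x : ℝ => ‖c - (x : ℂ)‖) lf atTop →
      Tendsto w lf (nhds 1) := by
    intro lf hlf
    have h0 : Tendsto (fun x : ℝ => (l - c) / (c - x)) lf (nhds 0) := by
      rw [tendsto_zero_iff_norm_tendsto_zero]
      simp only [norm_div]
      exact Tendsto.div_atTop tendsto_const_nhds hlf
    have := h0.const_add (1 : ℂ)
    simp only [add_zero] at this
    exact Tendsto.congr (fun x => (hwt x).symm) this
  have hFlim : ∀ (lf : Filter ℝ), Tendsto (fun x : ℝ => ‖c - (x : ℂ)‖) lf atTop →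
      Tendsto F lf (nhds (1 / ((k : ℂ) * (l - c)))) := by
    intro lf hlf
    have h1 : Tendsto (fun x : ℝ => w x ^ k) lf (nhds 1) := by
      have hz : ContinuousAt (fun z : ℂ => z ^ k) 1 :=
        continuousAt_zpow₀ 1 k (Or.inl one_ne_zero)
      have := hz.tendsto.comp (hwlim lf hlf)
      rw [one_zpow] at this; exact this
    simpa using h1.div_const ((k : ℂ) * (l - c))
  have := integral_of_hasDerivAt_of_tendsto hderiv hint
    (hFlim atBot hnorm_bot) (hFlim atTop hnorm_top)
  rw [show (∫ x : ℝ, Complex.exp (I * k * H x) / ((c - x) * (l - x))) = ∫ x : ℝ, g x from rfl,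
    this, sub_self]


lemma aux_den (l : ℂ) : ∀ x : ℝ,
    ((starRingEnd ℂ) l - x) * (l - x) = (((x - l.re) ^ 2 + l.im ^ 2 : ℝ) : ℂ) := by
  intro x
  have h1 : (starRingEnd ℂ) l - (x : ℂ) = (starRingEnd ℂ) (l - x) := by
    simp [map_sub, Complex.conj_ofReal]
  rw [h1, mul_comm, Complex.mul_conj]
  norm_cast
  simp [Complex.normSq_apply, Complex.sub_re, Complex.sub_im]
  ring

theorem generalMT_orthonormal (l : ℂ) (him : l.im ≠ 0) (ω δ : ℝ)
    (γ : ℤ → ℂ) (hγ : ∀ n, ‖γ n‖ = 1)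
    (H : ℝ → ℝ) (hH : Continuous H)
    (hHarg : ∀ x : ℝ, Complex.exp (I * H x) = (l - x) / ((starRingEnd ℂ) l - x))
    (φ : ℤ → ℝ → ℂ)
    (hφ : ∀ n x, φ n x = γ n * (Real.sqrt (|l.im| / Real.pi) : ℂ) *
      Complex.exp (I * ω * x) * Complex.exp (I * ((n : ℂ) + δ) * H x) /
        ((starRingEnd ℂ) l - x)) :
    ∀ m n : ℤ, ∫ x : ℝ, φ m x * (starRingEnd ℂ) (φ n x) = if m = n then 1 else 0 := by
  intro m n
  set K := starRingEnd ℂ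
  set s : ℝ := Real.sqrt (|l.im| / Real.pi) with hsdef
  set r : ℝ := |l.im| / Real.pi with hrdef
  have hπ : Real.pi ≠ 0 := Real.pi_ne_zero
  have hs : (s : ℂ) * s = (r : ℂ) := by
    rw [← Complex.ofReal_mul, Real.mul_self_sqrt (div_nonneg (abs_nonneg _) Real.pi_pos.le)]
  have e1 : ∀ z : ℂ, Complex.exp z * Complex.exp (-z) = 1 := fun z => by
    rw [← Complex.exp_add, add_neg_cancel, Complex.exp_zero]
  have hpt : ∀ x : ℝ, φ m x * K (φ n x) =
      (γ m * K (γ n)) * (r : ℂ) *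
        (Complex.exp (I * ((m : ℂ) - n) * H x) / ((K l - x) * (l - x))) := by
    intro x
    have hc1 : K (Complex.exp (I * ω * x)) = Complex.exp (-(I * ω * x)) := by
      rw [← Complex.exp_conj]
      congr 1
      rw [map_mul, map_mul, Complex.conj_I, Complex.conj_ofReal, Complex.conj_ofReal]
      ring
    have hc2 : K (Complex.exp (I * ((n : ℂ) + δ) * H x)) =
        Complex.exp (-(I * ((n : ℂ) + δ) * H x)) := by
      rw [← Complex.exp_conj]
      congr 1
      rw [map_mul, map_mul, map_add, Complex.conj_I, Complex.conj_ofReal, Complex.conj_ofReal,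
        map_intCast]
      ring
    have hcd : K (K l - (x : ℂ)) = l - x := by
      rw [map_sub, Complex.conj_conj, Complex.conj_ofReal]
    have e2 : Complex.exp (I * ((m : ℂ) + δ) * H x) * Complex.exp (-(I * ((n : ℂ) + δ) * H x)) =
        Complex.exp (I * ((m : ℂ) - n) * H x) := by
      rw [← Complex.exp_add]
      congr 1
      ring
    rw [hφ m x, hφ n x, map_div₀, map_mul, map_mul, map_mul, hc1, hc2, hcd,
      Complex.conj_ofReal, div_mul_div_comm]
    rw [← hs, ← e2,
      show γ m * (s:ℂ) * Complex.exp (I * ω * x) * Complex.exp (I * ((m : ℂ) + δ) * H x) *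
          (K (γ n) * (s:ℂ) * Complex.exp (-(I * ω * x)) *
            Complex.exp (-(I * ((n : ℂ) + δ) * H x))) =
        γ m * K (γ n) * ((s:ℂ) * s) *
          (Complex.exp (I * ((m : ℂ) + δ) * H x) * Complex.exp (-(I * ((n : ℂ) + δ) * H x))) *
          (Complex.exp (I * ω * x) * Complex.exp (-(I * ω * x))) from by ring,
      e1, mul_one, mul_div_assoc]
  simp only [hpt]
  by_cases hmn : m = n
  · subst hmn
    rw [if_pos rfl]
    have hγm : γ m * K (γ m) = 1 := by
      rw [Complex.mul_conj, Complex.normSq_eq_norm_sq, hγ m]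
      norm_num
    have hint : ∀ x : ℝ, (γ m * K (γ m)) * (r : ℂ) *
        (Complex.exp (I * ((m : ℂ) - m) * H x) / ((K l - x) * (l - x))) =
        ((r * (((x - l.re) ^ 2 + l.im ^ 2))⁻¹ : ℝ) : ℂ) := by
      intro x
      rw [hγm, one_mul, sub_self, mul_zero, zero_mul, Complex.exp_zero, aux_den l x]
      push_cast
      ring
    simp only [hint]
    have hofr : ∫ x : ℝ, ((r * ((x - l.re) ^ 2 + l.im ^ 2)⁻¹ : ℝ) : ℂ) =
        ((∫ x : ℝ, r * ((x - l.re) ^ 2 + l.im ^ 2)⁻¹ : ℝ) : ℂ) := integral_ofReal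
    rw [hofr, integral_const_mul]
    have : ∫ x : ℝ, ((x - l.re) ^ 2 + l.im ^ 2)⁻¹ = Real.pi / |l.im| := by
      simpa using aux_integral l.re l.im him
    rw [this, hrdef]
    have habs : |l.im| ≠ 0 := abs_ne_zero.mpr him
    rw [show |l.im| / Real.pi * (Real.pi / |l.im|) = 1 by field_simp]
    norm_num
  · rw [if_neg hmn]
    have hk : m - n ≠ 0 := sub_ne_zero.mpr hmn
    have hcast : ∀ x : ℝ, Complex.exp (I * ((m : ℂ) - n) * H x) =
        Complex.exp (I * ((m - n : ℤ) : ℂ) * H x) := by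
      intro x; push_cast; ring_nf
    simp only [hcast, mul_div_assoc]
    rw [integral_const_mul, key_zero l him H hH hHarg (m - n) hk, mul_zero]
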